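/- Let (X,Y) have a joint density p_{X,Y} on ℝ² with differentiable marginal densities p_X, p_Y, finite variances v_X = Var(X), v_Y = Var(Y), finite Fisher informations J(X), J(Y), and ψ-mixing coefficient ψ(X,Y) = sup_{x,y} |p_{X,Y}(x,y)/(p_X(x)p_Y(y)) − 1|. Then E[ρ_X(X) ρ_Y(Y)] − Cov(X,Y)/(v_X v_Y) ≥ −ψ(X,Y) √(J(X) J(Y) − (v_X v_Y)^{-1}). -/

import Mathlib

open MeasureTheory Real

/-- `ρ⁽¹⁾(x,y) = (∂p/∂x)(x,y) / p(x,y)`. -/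
noncomputable def score1 (p : ℝ × ℝ → ℝ) (z : ℝ × ℝ) : ℝ :=
  deriv (fun x => p (x, z.2)) z.1 / p z

/-- `ρ⁽²⁾(x,y) = (∂p/∂y)(x,y) / p(x,y)`. -/
noncomputable def score2 (p : ℝ × ℝ → ℝ) (z : ℝ × ℝ) : ℝ :=
  deriv (fun y => p (z.1, y)) z.2 / p z

/-- `J_XX = E[ρ⁽¹⁾(X,Y)²]`. -/
noncomputable def Jxx (p : ℝ × ℝ → ℝ) : ℝ := ∫ z, p z * (score1 p z) ^ 2

/-- `J_YY = E[ρ⁽²⁾(X,Y)²]`. -/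
noncomputable def Jyy (p : ℝ × ℝ → ℝ) : ℝ := ∫ z, p z * (score2 p z) ^ 2

/-- `J_XY = E[ρ⁽¹⁾(X,Y) ρ⁽²⁾(X,Y)]`. -/
noncomputable def Jxy (p : ℝ × ℝ → ℝ) : ℝ := ∫ z, p z * (score1 p z * score2 p z)

/-- Density of `W = X + Y`: `p_W(w) = ∫ p(x, w-x) dx`. -/
noncomputable def sumDensity (p : ℝ × ℝ → ℝ) (w : ℝ) : ℝ := ∫ x, p (x, w - x)

/-- Score of the sum: `ρ_W = p_W'/p_W`. -/
noncomputable def scoreW (p : ℝ × ℝ → ℝ) (w : ℝ) : ℝ :=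
  deriv (sumDensity p) w / sumDensity p w

/-- `J(X+Y) = E[ρ_W(W)²]`. -/
noncomputable def Jsum (p : ℝ × ℝ → ℝ) : ℝ := ∫ w, sumDensity p w * (scoreW p w) ^ 2

/-- `p` is a joint probability density on `ℝ²`. -/
def IsJointDensity (p : ℝ × ℝ → ℝ) : Prop :=
  Measurable p ∧ (∀ z, 0 ≤ p z) ∧ (∫ z, p z) = 1

/-- Marginal density of `X` for a joint density `p` on `ℝ²`. -/
noncomputable def margX (p : ℝ × ℝ → ℝ) (x : ℝ) : ℝ := ∫ y, p (x, y)

/-- Marginal density of `Y` for a joint density `p` on `ℝ²`. -/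
noncomputable def margY (p : ℝ × ℝ → ℝ) (y : ℝ) : ℝ := ∫ x, p (x, y)

/-- Score function `ρ = q'/q` of a density `q` on `ℝ`. -/
noncomputable def score (q : ℝ → ℝ) (x : ℝ) : ℝ := deriv q x / q x

/-- Marginal Fisher information `J = E[ρ(X)²] = ∫ q ρ²` of a density `q` on `ℝ`. -/
noncomputable def fisherInfo (q : ℝ → ℝ) : ℝ := ∫ x, q x * (score q x) ^ 2

/-- Mean of `X` under the joint density `p`. -/
noncomputable def meanX (p : ℝ × ℝ → ℝ) : ℝ := ∫ z, p z * z.1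

/-- Mean of `Y` under the joint density `p`. -/
noncomputable def meanY (p : ℝ × ℝ → ℝ) : ℝ := ∫ z, p z * z.2

/-- Variance of `X` under the joint density `p`. -/
noncomputable def varX (p : ℝ × ℝ → ℝ) : ℝ := ∫ z, p z * (z.1 - meanX p) ^ 2

/-- Variance of `Y` under the joint density `p`. -/
noncomputable def varY (p : ℝ × ℝ → ℝ) : ℝ := ∫ z, p z * (z.2 - meanY p) ^ 2

/-- Covariance of `X` and `Y` under the joint density `p`. -/
noncomputable def covXY (p : ℝ × ℝ → ℝ) : ℝ :=
  ∫ z, p z * ((z.1 - meanX p) * (z.2 - meanY p))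

/-- The `ψ`-mixing coefficient `ψ(X,Y) = sup_{x,y} |p_{X,Y}(x,y)/(p_X(x)p_Y(y)) − 1|`. -/
noncomputable def psiMix (p : ℝ × ℝ → ℝ) : ℝ :=
  ⨆ z : ℝ × ℝ, |p z / (margX p z.1 * margY p z.2) - 1|

section Auxi

open Set Filter

variable {α : Type*} [MeasurableSpace α] {μ : Measure α}

/-- Cauchy–Schwarz for a probability weight. -/
lemma aux_cs {w f : α → ℝ} (hw : ∀ x, 0 ≤ w x) (hw1 : (∫ x, w x ∂μ) = 1)
    (hwint : Integrable w μ)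
    (h1 : Integrable (fun x => w x * |f x|) μ)
    (h2 : Integrable (fun x => w x * f x ^ 2) μ) :
    ∫ x, w x * |f x| ∂μ ≤ Real.sqrt (∫ x, w x * f x ^ 2 ∂μ) := by
  set I := ∫ x, w x * |f x| ∂μ with hI
  set J := ∫ x, w x * f x ^ 2 ∂μ with hJ
  have hI0 : 0 ≤ I := integral_nonneg fun x => mul_nonneg (hw x) (abs_nonneg _)
  have key : 0 ≤ ∫ x, (w x * f x ^ 2 - 2 * I * (w x * |f x|) + I ^ 2 * w x) ∂μ := by
    refine integral_nonneg fun x => ?_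
    have : w x * f x ^ 2 - 2 * I * (w x * |f x|) + I ^ 2 * w x = w x * (|f x| - I) ^ 2 := by
      rw [← sq_abs (f x)]; ring
    rw [this]
    exact mul_nonneg (hw x) (sq_nonneg _)
  have h1' : Integrable (fun x => 2 * I * (w x * |f x|)) μ := h1.const_mul _
  have h2' : Integrable (fun x => I ^ 2 * w x) μ := hwint.const_mul _
  have hsub : Integrable (fun x => w x * f x ^ 2 - 2 * I * (w x * |f x|)) μ := h2.sub h1'
  rw [integral_add hsub h2', integral_sub h2 h1', integral_const_mul,
      integral_const_mul, hw1] at key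
  have hsq : I ^ 2 ≤ J := by simp only [← hI, ← hJ] at key ⊢; nlinarith
  calc I = Real.sqrt (I ^ 2) := by rw [Real.sqrt_sq hI0]
    _ ≤ Real.sqrt J := Real.sqrt_le_sqrt hsq

lemma aux_amgm {u t : ℝ} (hu : 0 ≤ u) : u * |t| ≤ (u + u * t ^ 2) / 2 := by
  nlinarith [sq_abs t, abs_nonneg t, mul_nonneg hu (sq_nonneg (1 - |t|))]

lemma aux_amgm2 {u s t : ℝ} (hu : 0 ≤ u) :
    u * (|s| * |t|) ≤ (u * s ^ 2 + u * t ^ 2) / 2 := by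
  nlinarith [sq_abs s, sq_abs t, abs_nonneg s, abs_nonneg t,
    mul_nonneg hu (sq_nonneg (|s| - |t|))]

variable {m : ℝ → ℝ}

lemma deriv_eq_mul_score (hnn : ∀ x, 0 ≤ m x) (hd : Differentiable ℝ m) (x : ℝ) :
    deriv m x = m x * score m x := by
  rcases (hnn x).eq_or_lt with h | h
  · have hmin : IsLocalMin m x := Filter.Eventually.of_forall fun y => by
      rw [← h]; exact hnn y
    rw [hmin.deriv_eq_zero, ← h, zero_mul]
  · rw [score, mul_div_cancel₀ _ (ne_of_gt h)]

lemma integrable_mul_score (hnn : ∀ x, 0 ≤ m x) (hd : Differentiable ℝ m)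
    (hint : Integrable m) (hJ : Integrable fun x => m x * score m x ^ 2) :
    Integrable fun x => m x * score m x := by
  refine Integrable.mono' ((hint.add hJ).div_const 2)
    ((measurable_deriv m).aestronglyMeasurable.congr
      (Filter.Eventually.of_forall fun x => deriv_eq_mul_score hnn hd x))
    (Filter.Eventually.of_forall fun x => ?_)
  have h1 := hnn x
  have h2 := sq_abs (score m x)
  rw [norm_eq_abs, abs_mul, abs_of_nonneg h1]
  simp only [Pi.add_apply]
  nlinarith [abs_nonneg (score m x), mul_nonneg h1 (sq_nonneg (1 - |score m x|))]

lemma integral_mul_score_eq_zero (hnn : ∀ x, 0 ≤ m x) (hd : Differentiable ℝ m)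
    (hint : Integrable m) (hJ : Integrable fun x => m x * score m x ^ 2) :
    (∫ x, m x * score m x) = 0 := by
  have h1 : (∫ x, deriv m x) = 0 :=
    integral_eq_zero_of_hasDerivAt_of_integrable (fun x => (hd x).hasDerivAt)
      ((integrable_mul_score hnn hd hint hJ).congr
        (Filter.Eventually.of_forall fun x => (deriv_eq_mul_score hnn hd x).symm)) hint
  rw [← h1]
  exact integral_congr_ae (Filter.Eventually.of_forall fun x =>
    (deriv_eq_mul_score hnn hd x).symm)

lemma integrable_mul_score_mul (hnn : ∀ x, 0 ≤ m x) (hd : Differentiable ℝ m) (μ0 : ℝ)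
    (hJ : Integrable fun x => m x * score m x ^ 2)
    (h2 : Integrable fun x => m x * (x - μ0) ^ 2) :
    Integrable fun x => m x * score m x * (x - μ0) := by
  have hmeasf : Measurable fun x => m x * score m x * (x - μ0) := by
    simp only [score]
    exact (hd.continuous.measurable.mul
      ((measurable_deriv m).div hd.continuous.measurable)).mul
      (measurable_id.sub measurable_const)
  refine Integrable.mono' ((hJ.add h2).div_const 2) hmeasf.aestronglyMeasurable
    (Filter.Eventually.of_forall fun x => ?_)
  have h1 := hnn x
  rw [norm_eq_abs, abs_mul, abs_mul, abs_of_nonneg h1]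
  simp only [Pi.add_apply]
  nlinarith [abs_nonneg (score m x), abs_nonneg (x - μ0), sq_abs (score m x), sq_abs (x - μ0),
    mul_nonneg h1 (sq_nonneg (|score m x| - |x - μ0|))]

lemma integrable_mul_sub (hnn : ∀ x, 0 ≤ m x) (hmeas : Measurable m) (μ0 : ℝ)
    (hint : Integrable m)
    (h2 : Integrable fun x => m x * (x - μ0) ^ 2) :
    Integrable fun x => m x * (x - μ0) := by
  refine Integrable.mono' ((hint.add h2).div_const 2)
    ((hmeas.mul ((measurable_id.sub measurable_const))).aestronglyMeasurable)
    (Filter.Eventually.of_forall fun x => ?_)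
  have h1 := hnn x
  rw [norm_eq_abs, abs_mul, abs_of_nonneg h1]
  simp only [Pi.add_apply]
  nlinarith [abs_nonneg (x - μ0), sq_abs (x - μ0), mul_nonneg h1 (sq_nonneg (1 - |x - μ0|))]

/-- Integration by parts: `∫ m ρ (x-μ₀) = -∫ m`. -/
lemma integral_mul_score_mul_eq (hnn : ∀ x, 0 ≤ m x) (hd : Differentiable ℝ m) (μ0 : ℝ)
    (hint : Integrable m) (hJ : Integrable fun x => m x * score m x ^ 2)
    (h2 : Integrable fun x => m x * (x - μ0) ^ 2) :
    (∫ x, m x * score m x * (x - μ0)) = -∫ x, m x := by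
  have hG : ∀ x : ℝ, HasDerivAt (fun x => m x * (x - μ0))
      (m x * score m x * (x - μ0) + m x) x := by
    intro x
    have := ((hd x).hasDerivAt.mul ((hasDerivAt_id x).sub_const μ0))
    rw [deriv_eq_mul_score hnn hd x] at this
    exact this.congr_deriv (by simp)
  have hGint : Integrable fun x => m x * (x - μ0) :=
    integrable_mul_sub hnn hd.continuous.measurable μ0 hint h2
  have hG'int : Integrable fun x => m x * score m x * (x - μ0) + m x :=
    (integrable_mul_score_mul hnn hd μ0 hJ h2).add hint
  have h0 := integral_eq_zero_of_hasDerivAt_of_integrable hG hG'int hGint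
  rw [integral_add (integrable_mul_score_mul hnn hd μ0 hJ h2) hint] at h0
  linarith

end Auxi

/-- For `(X,Y)` with joint density `p`, differentiable marginals, finite variances, finite
Fisher informations and `ψ`-mixing coefficient `ψ(X,Y)`,
`E[ρ_X(X) ρ_Y(Y)] − Cov(X,Y)/(v_X v_Y) ≥ −ψ(X,Y) √(J(X) J(Y) − (v_X v_Y)⁻¹)`. -/
theorem score_product_psi_mixing_bound
    (p : ℝ × ℝ → ℝ) (hp : IsJointDensity p)
    (hdX : Differentiable ℝ (margX p)) (hdY : Differentiable ℝ (margY p))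
    (hmX : Integrable (fun z : ℝ × ℝ => p z * z.1))
    (hmY : Integrable (fun z : ℝ × ℝ => p z * z.2))
    (hvX : Integrable (fun z : ℝ × ℝ => p z * (z.1 - meanX p) ^ 2))
    (hvY : Integrable (fun z : ℝ × ℝ => p z * (z.2 - meanY p) ^ 2))
    (hJX : Integrable (fun x => margX p x * (score (margX p) x) ^ 2))
    (hJY : Integrable (fun y => margY p y * (score (margY p) y) ^ 2))
    (hpsi : BddAbove (Set.range fun z : ℝ × ℝ => |p z / (margX p z.1 * margY p z.2) - 1|)) :
    -(psiMix p * Real.sqrt (fisherInfo (margX p) * fisherInfo (margY p)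
          - (varX p * varY p)⁻¹))
      ≤ (∫ z, p z * (score (margX p) z.1 * score (margY p) z.2))
          - covXY p / (varX p * varY p) := by
  obtain ⟨hpm, hpnn, hp1⟩ := hp
  -- basic integrability of p
  have hpint : Integrable p := by
    by_contra h
    rw [integral_undef h] at hp1
    exact one_ne_zero hp1.symm
  have hpprod : Integrable p ((volume : Measure ℝ).prod volume) := hpint
  have hmXprod : Integrable (fun z : ℝ × ℝ => p z * z.1) ((volume : Measure ℝ).prod volume) := hmX
  have hmYprod : Integrable (fun z : ℝ × ℝ => p z * z.2) ((volume : Measure ℝ).prod volume) := hmY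
  have hvXprod : Integrable (fun z : ℝ × ℝ => p z * (z.1 - meanX p) ^ 2)
      ((volume : Measure ℝ).prod volume) := hvX
  have hvYprod : Integrable (fun z : ℝ × ℝ => p z * (z.2 - meanY p) ^ 2)
      ((volume : Measure ℝ).prod volume) := hvY
  -- marginal basics
  have hmX_meas : Measurable (margX p) :=
    (hpm.stronglyMeasurable.integral_prod_right' (ν := volume)).measurable
  have hmY_meas : Measurable (margY p) :=
    (hpm.stronglyMeasurable.integral_prod_left' (μ := volume)).measurable
  have hmX_nn : ∀ x, 0 ≤ margX p x := fun x => integral_nonneg fun y => hpnn _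
  have hmY_nn : ∀ y, 0 ≤ margY p y := fun y => integral_nonneg fun x => hpnn _
  have hmX_int : Integrable (margX p) := hpprod.integral_prod_left
  have hmY_int : Integrable (margY p) := hpprod.integral_prod_right
  have hmX1 : (∫ x, margX p x) = 1 := by
    have e1 := integral_integral (f := fun x y => p (x, y)) hpprod
    simp only [Prod.mk.eta] at e1
    rw [← hp1]
    exact e1
  have hmY1 : (∫ y, margY p y) = 1 := by
    have e2 : (∫ x, ∫ y, p (x, y)) = ∫ y, ∫ x, p (x, y) :=
      integral_integral_swap (f := fun x y => p (x, y)) hpprod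
    have e1 : (∫ x, ∫ y, p (x, y)) = ∫ z : ℝ × ℝ, p z := integral_integral hpprod
    have e4 : (∫ y, ∫ x, p (x, y)) = ∫ y, margY p y := rfl
    rw [← e4, ← e2, e1, hp1]
  -- moment transfers to the marginals
  have hmXx_int : Integrable (fun x => margX p x * x) := by
    have h := hmXprod.integral_prod_left
    refine h.congr (Filter.Eventually.of_forall fun x => ?_)
    exact integral_mul_const x (fun y => p (x, y))
  have hmX_mean : (∫ x, margX p x * x) = meanX p := by
    have e1 : (∫ x, ∫ y, p (x, y) * x) = ∫ z : ℝ × ℝ, p z * z.1 := integral_integral hmXprod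
    have e4 : (∫ x, ∫ y, p (x, y) * x) = ∫ x, margX p x * x :=
      integral_congr_ae (Filter.Eventually.of_forall fun x =>
        integral_mul_const x (fun y => p (x, y)))
    rw [← e4, e1, meanX]
  have hmX2_int : Integrable (fun x => margX p x * (x - meanX p) ^ 2) := by
    have h := hvXprod.integral_prod_left
    refine h.congr (Filter.Eventually.of_forall fun x => ?_)
    exact integral_mul_const ((x - meanX p) ^ 2) (fun y => p (x, y))
  have hmX_var : (∫ x, margX p x * (x - meanX p) ^ 2) = varX p := by
    have e1 : (∫ x, ∫ y, p (x, y) * (x - meanX p) ^ 2)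
        = ∫ z : ℝ × ℝ, p z * (z.1 - meanX p) ^ 2 := integral_integral hvXprod
    have e4 : (∫ x, ∫ y, p (x, y) * (x - meanX p) ^ 2)
        = ∫ x, margX p x * (x - meanX p) ^ 2 :=
      integral_congr_ae (Filter.Eventually.of_forall fun x =>
        integral_mul_const _ (fun y => p (x, y)))
    rw [← e4, e1, varX]
  have hmYy_int : Integrable (fun y => margY p y * y) := by
    have h := hmYprod.integral_prod_right
    refine h.congr (Filter.Eventually.of_forall fun y => ?_)
    exact integral_mul_const y (fun x => p (x, y))
  have hmY_mean : (∫ y, margY p y * y) = meanY p := by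
    have e1 : (∫ x, ∫ y, p (x, y) * y) = ∫ z : ℝ × ℝ, p z * z.2 := integral_integral hmYprod
    have e2 : (∫ x, ∫ y, p (x, y) * y) = ∫ y, ∫ x, p (x, y) * y :=
      integral_integral_swap (f := fun x y => p (x, y) * y) hmYprod
    have e4 : (∫ y, ∫ x, p (x, y) * y) = ∫ y, margY p y * y :=
      integral_congr_ae (Filter.Eventually.of_forall fun y =>
        integral_mul_const y (fun x => p (x, y)))
    rw [← e4, ← e2, e1, meanY]
  have hmY2_int : Integrable (fun y => margY p y * (y - meanY p) ^ 2) := by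
    have h := hvYprod.integral_prod_right
    refine h.congr (Filter.Eventually.of_forall fun y => ?_)
    exact integral_mul_const ((y - meanY p) ^ 2) (fun x => p (x, y))
  have hmY_var : (∫ y, margY p y * (y - meanY p) ^ 2) = varY p := by
    have e1 : (∫ x, ∫ y, p (x, y) * (y - meanY p) ^ 2)
        = ∫ z : ℝ × ℝ, p z * (z.2 - meanY p) ^ 2 := integral_integral hvYprod
    have e2 : (∫ x, ∫ y, p (x, y) * (y - meanY p) ^ 2)
        = ∫ y, ∫ x, p (x, y) * (y - meanY p) ^ 2 :=
      integral_integral_swap (f := fun x y => p (x, y) * (y - meanY p) ^ 2) hvYprod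
    have e4 : (∫ y, ∫ x, p (x, y) * (y - meanY p) ^ 2)
        = ∫ y, margY p y * (y - meanY p) ^ 2 :=
      integral_congr_ae (Filter.Eventually.of_forall fun y =>
        integral_mul_const _ (fun x => p (x, y)))
    rw [← e4, ← e2, e1, varY]
  -- score facts for the marginals
  have hsX_int : Integrable (fun x => margX p x * score (margX p) x) :=
    integrable_mul_score hmX_nn hdX hmX_int hJX
  have hsY_int : Integrable (fun y => margY p y * score (margY p) y) :=
    integrable_mul_score hmY_nn hdY hmY_int hJY
  have hSX0 : (∫ x, margX p x * score (margX p) x) = 0 :=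
    integral_mul_score_eq_zero hmX_nn hdX hmX_int hJX
  have hSY0 : (∫ y, margY p y * score (margY p) y) = 0 :=
    integral_mul_score_eq_zero hmY_nn hdY hmY_int hJY
  have hsXa_int : Integrable (fun x => margX p x * score (margX p) x * (x - meanX p)) :=
    integrable_mul_score_mul hmX_nn hdX (meanX p) hJX hmX2_int
  have hsYa_int : Integrable (fun y => margY p y * score (margY p) y * (y - meanY p)) :=
    integrable_mul_score_mul hmY_nn hdY (meanY p) hJY hmY2_int
  have hSX1 : (∫ x, margX p x * score (margX p) x * (x - meanX p)) = -1 := by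
    rw [integral_mul_score_mul_eq hmX_nn hdX (meanX p) hmX_int hJX hmX2_int, hmX1]
  have hSY1 : (∫ y, margY p y * score (margY p) y * (y - meanY p)) = -1 := by
    rw [integral_mul_score_mul_eq hmY_nn hdY (meanY p) hmY_int hJY hmY2_int, hmY1]
  have haX_int : Integrable (fun x => margX p x * (x - meanX p)) :=
    integrable_mul_sub hmX_nn hmX_meas (meanX p) hmX_int hmX2_int
  have haY_int : Integrable (fun y => margY p y * (y - meanY p)) :=
    integrable_mul_sub hmY_nn hmY_meas (meanY p) hmY_int hmY2_int
  have haX0 : (∫ x, margX p x * (x - meanX p)) = 0 := by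
    have e : (fun x => margX p x * (x - meanX p))
        = fun x => margX p x * x - meanX p * margX p x := funext fun x => by ring
    rw [e, integral_sub hmXx_int (hmX_int.const_mul (meanX p)), integral_const_mul,
      hmX_mean, hmX1, mul_one, sub_self]
  have haY0 : (∫ y, margY p y * (y - meanY p)) = 0 := by
    have e : (fun y => margY p y * (y - meanY p))
        = fun y => margY p y * y - meanY p * margY p y := funext fun y => by ring
    rw [e, integral_sub hmYy_int (hmY_int.const_mul (meanY p)), integral_const_mul,
      hmY_mean, hmY1, mul_one, sub_self]
  -- psi facts
  have hψz : ∀ z : ℝ × ℝ, |p z / (margX p z.1 * margY p z.2) - 1| ≤ psiMix p :=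
    fun z => le_ciSup hpsi z
  have hψ0 : 0 ≤ psiMix p := le_trans (abs_nonneg _) (hψz (0, 0))
  -- a.e. domination
  have hN1 : ∀ᵐ z : ℝ × ℝ, margX p z.1 = 0 → p z = 0 := by
    have hA : MeasurableSet (margX p ⁻¹' {0}) := hmX_meas (measurableSet_singleton 0)
    have hres : (volume.restrict (margX p ⁻¹' {0})).prod (volume : Measure ℝ)
        = ((volume : Measure ℝ).prod volume).restrict ((margX p ⁻¹' {0}) ×ˢ Set.univ) :=
      Measure.restrict_prod_eq_prod_univ _
    have hint2 : Integrable p ((volume.restrict (margX p ⁻¹' {0})).prod volume) := by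
      rw [hres]; exact hpprod.restrict
    have hzero : ∫ z, p z ∂((volume.restrict (margX p ⁻¹' {0})).prod volume) = 0 := by
      have e1 := integral_integral (f := fun x y => p (x, y)) hint2
      simp only [Prod.mk.eta] at e1
      rw [← e1]
      calc ∫ x in margX p ⁻¹' {0}, ∫ y, p (x, y)
          = ∫ x in margX p ⁻¹' {0}, (0 : ℝ) :=
            setIntegral_congr_fun hA (fun x hx => hx)
        _ = 0 := by simp
    have hzero' : ∫ z in ((margX p ⁻¹' {0}) ×ˢ Set.univ), p z
        ∂((volume : Measure ℝ).prod volume) = 0 := by rw [← hres]; exact hzero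
    have haez : p =ᵐ[((volume : Measure ℝ).prod volume).restrict
        ((margX p ⁻¹' {0}) ×ˢ Set.univ)] 0 := by
      refine (integral_eq_zero_iff_of_nonneg_ae
        (Filter.Eventually.of_forall fun z => hpnn z) ?_).mp hzero'
      rw [← hres]; exact hint2
    have haev : ∀ᵐ z : ℝ × ℝ ∂((volume : Measure ℝ).prod volume),
        z ∈ (margX p ⁻¹' {0}) ×ˢ Set.univ → p z = 0 :=
      (ae_restrict_iff' (hA.prod MeasurableSet.univ)).mp haez
    have haev' : ∀ᵐ z : ℝ × ℝ, z ∈ (margX p ⁻¹' {0}) ×ˢ Set.univ → p z = 0 := haev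
    filter_upwards [haev'] with z hz hz1
    exact hz (Set.mem_prod.mpr ⟨hz1, Set.mem_univ _⟩)
  have hN2 : ∀ᵐ z : ℝ × ℝ, margY p z.2 = 0 → p z = 0 := by
    have hB : MeasurableSet (margY p ⁻¹' {0}) := hmY_meas (measurableSet_singleton 0)
    have hres : (volume : Measure ℝ).prod (volume.restrict (margY p ⁻¹' {0}))
        = ((volume : Measure ℝ).prod volume).restrict (Set.univ ×ˢ (margY p ⁻¹' {0})) := by
      have h := Measure.prod_restrict (μ := (volume : Measure ℝ)) (ν := (volume : Measure ℝ))
        Set.univ (margY p ⁻¹' {0})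
      rwa [Measure.restrict_univ] at h
    have hint2 : Integrable p ((volume : Measure ℝ).prod (volume.restrict (margY p ⁻¹' {0}))) := by
      rw [hres]; exact hpprod.restrict
    have hzero : ∫ z, p z ∂((volume : Measure ℝ).prod (volume.restrict (margY p ⁻¹' {0}))) = 0 := by
      have e1 := integral_integral (f := fun x y => p (x, y)) hint2
      have e2 := integral_integral_swap (f := fun x y => p (x, y)) hint2
      simp only [Prod.mk.eta] at e1
      rw [← e1, e2]
      calc ∫ y in margY p ⁻¹' {0}, ∫ x, p (x, y)
          = ∫ y in margY p ⁻¹' {0}, (0 : ℝ) :=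
            setIntegral_congr_fun hB (fun y hy => hy)
        _ = 0 := by simp
    have hzero' : ∫ z in (Set.univ ×ˢ (margY p ⁻¹' {0})), p z
        ∂((volume : Measure ℝ).prod volume) = 0 := by rw [← hres]; exact hzero
    have haez : p =ᵐ[((volume : Measure ℝ).prod volume).restrict
        (Set.univ ×ˢ (margY p ⁻¹' {0}))] 0 := by
      refine (integral_eq_zero_iff_of_nonneg_ae
        (Filter.Eventually.of_forall fun z => hpnn z) ?_).mp hzero'
      rw [← hres]; exact hint2
    have haev : ∀ᵐ z : ℝ × ℝ ∂((volume : Measure ℝ).prod volume),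
        z ∈ Set.univ ×ˢ (margY p ⁻¹' {0}) → p z = 0 :=
      (ae_restrict_iff' (MeasurableSet.univ.prod hB)).mp haez
    have haev' : ∀ᵐ z : ℝ × ℝ, z ∈ Set.univ ×ˢ (margY p ⁻¹' {0}) → p z = 0 := haev
    filter_upwards [haev'] with z hz hz1
    exact hz (Set.mem_prod.mpr ⟨Set.mem_univ _, hz1⟩)
  have hae : ∀ᵐ z : ℝ × ℝ, |p z - margX p z.1 * margY p z.2|
      ≤ psiMix p * (margX p z.1 * margY p z.2) := by
    filter_upwards [hN1, hN2] with z h1 h2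
    rcases eq_or_ne (margX p z.1 * margY p z.2) 0 with hq0 | hq0
    · rcases mul_eq_zero.mp hq0 with h | h
      · simp [h1 h, hq0]
      · simp [h2 h, hq0]
    · have hqpos : 0 < margX p z.1 * margY p z.2 :=
        lt_of_le_of_ne (mul_nonneg (hmX_nn _) (hmY_nn _)) (Ne.symm hq0)
      have e : p z - margX p z.1 * margY p z.2
          = (p z / (margX p z.1 * margY p z.2) - 1) * (margX p z.1 * margY p z.2) := by
        rw [sub_mul, div_mul_cancel₀ _ hq0, one_mul]
      rw [e, abs_mul, abs_of_pos hqpos]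
      exact mul_le_mul_of_nonneg_right (hψz z) (le_of_lt hqpos)
  -- measurability on the plane
  have hρX_meas : Measurable (score (margX p)) := by
    have h : Measurable fun x => deriv (margX p) x / margX p x :=
      (measurable_deriv _).div hmX_meas
    exact h
  have hρY_meas : Measurable (score (margY p)) := by
    have h : Measurable fun y => deriv (margY p) y / margY p y :=
      (measurable_deriv _).div hmY_meas
    exact h
  have hq_meas : Measurable (fun z : ℝ × ℝ => margX p z.1 * margY p z.2) :=
    (hmX_meas.comp measurable_fst).mul (hmY_meas.comp measurable_snd)
  have hq_nn : ∀ z : ℝ × ℝ, 0 ≤ margX p z.1 * margY p z.2 := fun z => mul_nonneg (hmX_nn _) (hmY_nn _)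
  have hρρ_meas : Measurable (fun z : ℝ × ℝ => score (margX p) z.1 * score (margY p) z.2) :=
    (hρX_meas.comp measurable_fst).mul (hρY_meas.comp measurable_snd)
  have hd_meas : Measurable (fun z : ℝ × ℝ => (z.1 - meanX p) * (z.2 - meanY p)) :=
    (measurable_fst.sub measurable_const).mul (measurable_snd.sub measurable_const)
  have hF_meas : Measurable (fun z : ℝ × ℝ => (score (margX p) z.1 * score (margY p) z.2 - ((z.1 - meanX p) * (z.2 - meanY p)) / (varX p * varY p))) := hρρ_meas.sub (hd_meas.div_const _)
  -- product integrability on the plane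
  have hT1 : Integrable (fun z : ℝ × ℝ => (margX p z.1 * score (margX p) z.1 ^ 2) * (margY p z.2 * score (margY p) z.2 ^ 2)) := hJX.mul_prod hJY
  have hT2 : Integrable (fun z : ℝ × ℝ => (margX p z.1 * score (margX p) z.1 * (z.1 - meanX p)) * (margY p z.2 * score (margY p) z.2 * (z.2 - meanY p))) := hsXa_int.mul_prod hsYa_int
  have hT3 : Integrable (fun z : ℝ × ℝ => (margX p z.1 * (z.1 - meanX p) ^ 2) * (margY p z.2 * (z.2 - meanY p) ^ 2)) := hmX2_int.mul_prod hmY2_int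
  have hqint : Integrable (fun z : ℝ × ℝ => margX p z.1 * margY p z.2) := hmX_int.mul_prod hmY_int
  have hqρρ_int : Integrable (fun z : ℝ × ℝ => (margX p z.1 * score (margX p) z.1) * (margY p z.2 * score (margY p) z.2)) := hsX_int.mul_prod hsY_int
  have hqd_int : Integrable (fun z : ℝ × ℝ => (margX p z.1 * (z.1 - meanX p)) * (margY p z.2 * (z.2 - meanY p))) := haX_int.mul_prod haY_int
  -- product integrals on the plane
  have hIq : (∫ z : ℝ × ℝ, margX p z.1 * margY p z.2) = 1 := by
    have h : (∫ z : ℝ × ℝ, margX p z.1 * margY p z.2) = (∫ x, margX p x) * ∫ y, margY p y :=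
      integral_prod_mul (margX p) (margY p)
    rw [h, hmX1, hmY1, mul_one]
  have hIT1 : (∫ z : ℝ × ℝ, (margX p z.1 * score (margX p) z.1 ^ 2) * (margY p z.2 * score (margY p) z.2 ^ 2)) = fisherInfo (margX p) * fisherInfo (margY p) := by
    have h : (∫ z : ℝ × ℝ, (margX p z.1 * score (margX p) z.1 ^ 2) * (margY p z.2 * score (margY p) z.2 ^ 2))
        = (∫ x, margX p x * score (margX p) x ^ 2) * ∫ y, margY p y * score (margY p) y ^ 2 :=
      integral_prod_mul (fun x => margX p x * score (margX p) x ^ 2)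
        (fun y => margY p y * score (margY p) y ^ 2)
    rw [h, fisherInfo, fisherInfo]
  have hIT2 : (∫ z : ℝ × ℝ, (margX p z.1 * score (margX p) z.1 * (z.1 - meanX p)) * (margY p z.2 * score (margY p) z.2 * (z.2 - meanY p))) = 1 := by
    have h : (∫ z : ℝ × ℝ, (margX p z.1 * score (margX p) z.1 * (z.1 - meanX p)) * (margY p z.2 * score (margY p) z.2 * (z.2 - meanY p)))
        = (∫ x, margX p x * score (margX p) x * (x - meanX p))
          * ∫ y, margY p y * score (margY p) y * (y - meanY p) :=
      integral_prod_mul (fun x => margX p x * score (margX p) x * (x - meanX p))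
        (fun y => margY p y * score (margY p) y * (y - meanY p))
    rw [h, hSX1, hSY1]; norm_num
  have hIT3 : (∫ z : ℝ × ℝ, (margX p z.1 * (z.1 - meanX p) ^ 2) * (margY p z.2 * (z.2 - meanY p) ^ 2)) = varX p * varY p := by
    have h : (∫ z : ℝ × ℝ, (margX p z.1 * (z.1 - meanX p) ^ 2) * (margY p z.2 * (z.2 - meanY p) ^ 2))
        = (∫ x, margX p x * (x - meanX p) ^ 2) * ∫ y, margY p y * (y - meanY p) ^ 2 :=
      integral_prod_mul (fun x => margX p x * (x - meanX p) ^ 2)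
        (fun y => margY p y * (y - meanY p) ^ 2)
    rw [h, hmX_var, hmY_var]
  have hIqρρ : (∫ z : ℝ × ℝ, (margX p z.1 * score (margX p) z.1) * (margY p z.2 * score (margY p) z.2)) = 0 := by
    have h : (∫ z : ℝ × ℝ, (margX p z.1 * score (margX p) z.1) * (margY p z.2 * score (margY p) z.2))
        = (∫ x, margX p x * score (margX p) x) * ∫ y, margY p y * score (margY p) y :=
      integral_prod_mul (fun x => margX p x * score (margX p) x)
        (fun y => margY p y * score (margY p) y)
    rw [h, hSX0, zero_mul]
  have hIqd : (∫ z : ℝ × ℝ, (margX p z.1 * (z.1 - meanX p)) * (margY p z.2 * (z.2 - meanY p))) = 0 := by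
    have h : (∫ z : ℝ × ℝ, (margX p z.1 * (z.1 - meanX p)) * (margY p z.2 * (z.2 - meanY p)))
        = (∫ x, margX p x * (x - meanX p)) * ∫ y, margY p y * (y - meanY p) :=
      integral_prod_mul (fun x => margX p x * (x - meanX p))
        (fun y => margY p y * (y - meanY p))
    rw [h, haX0, zero_mul]
  -- expansion of q * F ^ 2
  have hF2eq : ∀ z : ℝ × ℝ, (margX p z.1 * margY p z.2) * (score (margX p) z.1 * score (margY p) z.2 - ((z.1 - meanX p) * (z.2 - meanY p)) / (varX p * varY p)) ^ 2
      = (margX p z.1 * score (margX p) z.1 ^ 2) * (margY p z.2 * score (margY p) z.2 ^ 2) - (2 / (varX p * varY p)) * ((margX p z.1 * score (margX p) z.1 * (z.1 - meanX p)) * (margY p z.2 * score (margY p) z.2 * (z.2 - meanY p))) + ((varX p * varY p) ^ 2)⁻¹ * ((margX p z.1 * (z.1 - meanX p) ^ 2) * (margY p z.2 * (z.2 - meanY p) ^ 2)) := fun z => by ring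
  have hqF2_int : Integrable (fun z : ℝ × ℝ => (margX p z.1 * margY p z.2) * (score (margX p) z.1 * score (margY p) z.2 - ((z.1 - meanX p) * (z.2 - meanY p)) / (varX p * varY p)) ^ 2) := by
    have h : Integrable (fun z : ℝ × ℝ =>
        (margX p z.1 * score (margX p) z.1 ^ 2) * (margY p z.2 * score (margY p) z.2 ^ 2) - (2 / (varX p * varY p)) * ((margX p z.1 * score (margX p) z.1 * (z.1 - meanX p)) * (margY p z.2 * score (margY p) z.2 * (z.2 - meanY p))) + ((varX p * varY p) ^ 2)⁻¹ * ((margX p z.1 * (z.1 - meanX p) ^ 2) * (margY p z.2 * (z.2 - meanY p) ^ 2))) :=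
      (hT1.sub (hT2.const_mul _)).add (hT3.const_mul _)
    exact h.congr (Filter.Eventually.of_forall fun z => (hF2eq z).symm)
  have hIqF2 : (∫ z : ℝ × ℝ, (margX p z.1 * margY p z.2) * (score (margX p) z.1 * score (margY p) z.2 - ((z.1 - meanX p) * (z.2 - meanY p)) / (varX p * varY p)) ^ 2)
      = fisherInfo (margX p) * fisherInfo (margY p) - (varX p * varY p)⁻¹ := by
    have ha : ∀ a : ℝ, (a ^ 2)⁻¹ * a = a⁻¹ := fun a => by
      rcases eq_or_ne a 0 with h | h
      · simp [h]
      · field_simp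
    calc (∫ z : ℝ × ℝ, (margX p z.1 * margY p z.2) * (score (margX p) z.1 * score (margY p) z.2 - ((z.1 - meanX p) * (z.2 - meanY p)) / (varX p * varY p)) ^ 2)
        = ∫ z : ℝ × ℝ, ((margX p z.1 * score (margX p) z.1 ^ 2) * (margY p z.2 * score (margY p) z.2 ^ 2) - (2 / (varX p * varY p)) * ((margX p z.1 * score (margX p) z.1 * (z.1 - meanX p)) * (margY p z.2 * score (margY p) z.2 * (z.2 - meanY p))) + ((varX p * varY p) ^ 2)⁻¹ * ((margX p z.1 * (z.1 - meanX p) ^ 2) * (margY p z.2 * (z.2 - meanY p) ^ 2))) :=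
          integral_congr_ae (Filter.Eventually.of_forall hF2eq)
      _ = (∫ z : ℝ × ℝ, ((margX p z.1 * score (margX p) z.1 ^ 2) * (margY p z.2 * score (margY p) z.2 ^ 2) - (2 / (varX p * varY p)) * ((margX p z.1 * score (margX p) z.1 * (z.1 - meanX p)) * (margY p z.2 * score (margY p) z.2 * (z.2 - meanY p)))))
            + ∫ z : ℝ × ℝ, ((varX p * varY p) ^ 2)⁻¹ * ((margX p z.1 * (z.1 - meanX p) ^ 2) * (margY p z.2 * (z.2 - meanY p) ^ 2)) :=
          integral_add (hT1.sub (hT2.const_mul _)) (hT3.const_mul _)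
      _ = (∫ z : ℝ × ℝ, (margX p z.1 * score (margX p) z.1 ^ 2) * (margY p z.2 * score (margY p) z.2 ^ 2)) - (∫ z : ℝ × ℝ, (2 / (varX p * varY p)) * ((margX p z.1 * score (margX p) z.1 * (z.1 - meanX p)) * (margY p z.2 * score (margY p) z.2 * (z.2 - meanY p))))
            + ∫ z : ℝ × ℝ, ((varX p * varY p) ^ 2)⁻¹ * ((margX p z.1 * (z.1 - meanX p) ^ 2) * (margY p z.2 * (z.2 - meanY p) ^ 2)) := by
          rw [integral_sub hT1 (hT2.const_mul _)]
      _ = fisherInfo (margX p) * fisherInfo (margY p) - (2 / (varX p * varY p)) * 1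
            + ((varX p * varY p) ^ 2)⁻¹ * (varX p * varY p) := by
          rw [integral_const_mul, integral_const_mul, hIT1, hIT2, hIT3]
      _ = fisherInfo (margX p) * fisherInfo (margY p) - (varX p * varY p)⁻¹ := by
          rw [ha (varX p * varY p)]; rw [div_eq_mul_inv]; ring
  have hIqF0 : (∫ z : ℝ × ℝ, (margX p z.1 * margY p z.2) * (score (margX p) z.1 * score (margY p) z.2 - ((z.1 - meanX p) * (z.2 - meanY p)) / (varX p * varY p))) = 0 := by
    calc (∫ z : ℝ × ℝ, (margX p z.1 * margY p z.2) * (score (margX p) z.1 * score (margY p) z.2 - ((z.1 - meanX p) * (z.2 - meanY p)) / (varX p * varY p)))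
        = ∫ z : ℝ × ℝ, ((margX p z.1 * score (margX p) z.1) * (margY p z.2 * score (margY p) z.2)
            - ((margX p z.1 * (z.1 - meanX p)) * (margY p z.2 * (z.2 - meanY p))) / (varX p * varY p)) :=
          integral_congr_ae (Filter.Eventually.of_forall fun z => by ring)
      _ = (∫ z : ℝ × ℝ, (margX p z.1 * score (margX p) z.1) * (margY p z.2 * score (margY p) z.2))
            - (∫ z : ℝ × ℝ, (margX p z.1 * (z.1 - meanX p)) * (margY p z.2 * (z.2 - meanY p))) / (varX p * varY p) := by
          rw [integral_sub hqρρ_int (hqd_int.div_const _), integral_div]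
      _ = 0 := by rw [hIqρρ, hIqd]; simp
  -- integrability of q * |F|, q * F, p-side functions
  have hqabsF_int : Integrable (fun z : ℝ × ℝ => (margX p z.1 * margY p z.2) * |(score (margX p) z.1 * score (margY p) z.2 - ((z.1 - meanX p) * (z.2 - meanY p)) / (varX p * varY p))|) := by
    have hb : Integrable (fun z : ℝ × ℝ => ((margX p z.1 * margY p z.2) + (margX p z.1 * margY p z.2) * (score (margX p) z.1 * score (margY p) z.2 - ((z.1 - meanX p) * (z.2 - meanY p)) / (varX p * varY p)) ^ 2) / 2) :=
      (hqint.add hqF2_int).div_const 2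
    refine Integrable.mono' hb ((hq_meas.mul hF_meas.abs).aestronglyMeasurable)
      (Filter.Eventually.of_forall fun z => ?_)
    have hq := hq_nn z
    rw [norm_eq_abs, abs_mul, abs_abs, abs_of_nonneg hq]
    exact aux_amgm hq
  have hqF_int : Integrable (fun z : ℝ × ℝ => (margX p z.1 * margY p z.2) * (score (margX p) z.1 * score (margY p) z.2 - ((z.1 - meanX p) * (z.2 - meanY p)) / (varX p * varY p))) := by
    refine Integrable.mono' hqabsF_int ((hq_meas.mul hF_meas).aestronglyMeasurable)
      (Filter.Eventually.of_forall fun z => ?_)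
    rw [norm_eq_abs, abs_mul, abs_of_nonneg (hq_nn z)]
  have hple : ∀ᵐ z : ℝ × ℝ, p z ≤ (1 + psiMix p) * (margX p z.1 * margY p z.2) := by
    filter_upwards [hae] with z hz
    have h1 := (abs_le.mp hz).2
    linarith
  have hpρρ_int : Integrable (fun z : ℝ × ℝ => p z * (score (margX p) z.1 * score (margY p) z.2)) := by
    have hqρρ2_int : Integrable (fun z : ℝ × ℝ => (margX p z.1 * margY p z.2) * (score (margX p) z.1 * score (margY p) z.2) ^ 2) :=
      hT1.congr (Filter.Eventually.of_forall fun z => by ring)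
    have hb : Integrable (fun z : ℝ × ℝ =>
        (1 + psiMix p) * (((margX p z.1 * margY p z.2) + (margX p z.1 * margY p z.2) * (score (margX p) z.1 * score (margY p) z.2) ^ 2) / 2)) :=
      ((hqint.add hqρρ2_int).div_const 2).const_mul _
    refine Integrable.mono' hb ((hpm.mul hρρ_meas).aestronglyMeasurable) ?_
    filter_upwards [hple] with z hz
    rw [norm_eq_abs, abs_mul, abs_of_nonneg (hpnn z)]
    have hq := hq_nn z
    have h2 : p z * |score (margX p) z.1 * score (margY p) z.2| ≤ (1 + psiMix p) * ((margX p z.1 * margY p z.2) * |score (margX p) z.1 * score (margY p) z.2|) := by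
      calc p z * |score (margX p) z.1 * score (margY p) z.2| ≤ ((1 + psiMix p) * (margX p z.1 * margY p z.2)) * |score (margX p) z.1 * score (margY p) z.2| :=
            mul_le_mul_of_nonneg_right hz (abs_nonneg _)
        _ = (1 + psiMix p) * ((margX p z.1 * margY p z.2) * |score (margX p) z.1 * score (margY p) z.2|) := by ring
    have h3 : (margX p z.1 * margY p z.2) * |score (margX p) z.1 * score (margY p) z.2| ≤ ((margX p z.1 * margY p z.2) + (margX p z.1 * margY p z.2) * (score (margX p) z.1 * score (margY p) z.2) ^ 2) / 2 :=
      aux_amgm hq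
    calc p z * |score (margX p) z.1 * score (margY p) z.2| ≤ (1 + psiMix p) * ((margX p z.1 * margY p z.2) * |score (margX p) z.1 * score (margY p) z.2|) := h2
      _ ≤ (1 + psiMix p) * (((margX p z.1 * margY p z.2) + (margX p z.1 * margY p z.2) * (score (margX p) z.1 * score (margY p) z.2) ^ 2) / 2) :=
          mul_le_mul_of_nonneg_left h3 (by linarith)
  have hpF_int : Integrable (fun z : ℝ × ℝ => p z * (score (margX p) z.1 * score (margY p) z.2 - ((z.1 - meanX p) * (z.2 - meanY p)) / (varX p * varY p))) := by
    refine Integrable.mono' (hqabsF_int.const_mul (1 + psiMix p))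
      ((hpm.mul hF_meas).aestronglyMeasurable) ?_
    filter_upwards [hple] with z hz
    rw [norm_eq_abs, abs_mul, abs_of_nonneg (hpnn z)]
    calc p z * |(score (margX p) z.1 * score (margY p) z.2 - ((z.1 - meanX p) * (z.2 - meanY p)) / (varX p * varY p))| ≤ ((1 + psiMix p) * (margX p z.1 * margY p z.2)) * |(score (margX p) z.1 * score (margY p) z.2 - ((z.1 - meanX p) * (z.2 - meanY p)) / (varX p * varY p))| :=
          mul_le_mul_of_nonneg_right hz (abs_nonneg _)
      _ = (1 + psiMix p) * ((margX p z.1 * margY p z.2) * |(score (margX p) z.1 * score (margY p) z.2 - ((z.1 - meanX p) * (z.2 - meanY p)) / (varX p * varY p))|) := by ring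
  have hpd_int : Integrable (fun z : ℝ × ℝ => p z * ((z.1 - meanX p) * (z.2 - meanY p))) := by
    have hb : Integrable (fun z : ℝ × ℝ =>
        (p z * (z.1 - meanX p) ^ 2 + p z * (z.2 - meanY p) ^ 2) / 2) :=
      (hvX.add hvY).div_const 2
    refine Integrable.mono' hb ((hpm.mul hd_meas).aestronglyMeasurable)
      (Filter.Eventually.of_forall fun z => ?_)
    rw [norm_eq_abs, abs_mul, abs_of_nonneg (hpnn z), abs_mul]
    exact aux_amgm2 (hpnn z)
  -- main chain
  have hpF_eq : (∫ z : ℝ × ℝ, p z * (score (margX p) z.1 * score (margY p) z.2 - ((z.1 - meanX p) * (z.2 - meanY p)) / (varX p * varY p)))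
      = (∫ z : ℝ × ℝ, p z * (score (margX p) z.1 * score (margY p) z.2)) - (∫ z : ℝ × ℝ, p z * ((z.1 - meanX p) * (z.2 - meanY p))) / (varX p * varY p) := by
    calc (∫ z : ℝ × ℝ, p z * (score (margX p) z.1 * score (margY p) z.2 - ((z.1 - meanX p) * (z.2 - meanY p)) / (varX p * varY p)))
        = ∫ z : ℝ × ℝ, (p z * (score (margX p) z.1 * score (margY p) z.2) - (p z * ((z.1 - meanX p) * (z.2 - meanY p))) / (varX p * varY p)) :=
          integral_congr_ae (Filter.Eventually.of_forall fun z => by ring)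
      _ = (∫ z : ℝ × ℝ, p z * (score (margX p) z.1 * score (margY p) z.2)) - ∫ z : ℝ × ℝ, (p z * ((z.1 - meanX p) * (z.2 - meanY p))) / (varX p * varY p) :=
          integral_sub hpρρ_int (hpd_int.div_const _)
      _ = (∫ z : ℝ × ℝ, p z * (score (margX p) z.1 * score (margY p) z.2)) - (∫ z : ℝ × ℝ, p z * ((z.1 - meanX p) * (z.2 - meanY p))) / (varX p * varY p) := by
          rw [integral_div]
  have hsplit : (∫ z : ℝ × ℝ, (p z - (margX p z.1 * margY p z.2)) * (score (margX p) z.1 * score (margY p) z.2 - ((z.1 - meanX p) * (z.2 - meanY p)) / (varX p * varY p))) = ∫ z : ℝ × ℝ, p z * (score (margX p) z.1 * score (margY p) z.2 - ((z.1 - meanX p) * (z.2 - meanY p)) / (varX p * varY p)) := by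
    have h : (∫ z : ℝ × ℝ, (p z - (margX p z.1 * margY p z.2)) * (score (margX p) z.1 * score (margY p) z.2 - ((z.1 - meanX p) * (z.2 - meanY p)) / (varX p * varY p)))
        = (∫ z : ℝ × ℝ, p z * (score (margX p) z.1 * score (margY p) z.2 - ((z.1 - meanX p) * (z.2 - meanY p)) / (varX p * varY p))) - ∫ z : ℝ × ℝ, (margX p z.1 * margY p z.2) * (score (margX p) z.1 * score (margY p) z.2 - ((z.1 - meanX p) * (z.2 - meanY p)) / (varX p * varY p)) := by
      rw [← integral_sub hpF_int hqF_int]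
      exact integral_congr_ae (Filter.Eventually.of_forall fun z => by ring)
    rw [h, hIqF0, sub_zero]
  have hmono : -(psiMix p * ∫ z : ℝ × ℝ, (margX p z.1 * margY p z.2) * |(score (margX p) z.1 * score (margY p) z.2 - ((z.1 - meanX p) * (z.2 - meanY p)) / (varX p * varY p))|)
      ≤ ∫ z : ℝ × ℝ, (p z - (margX p z.1 * margY p z.2)) * (score (margX p) z.1 * score (margY p) z.2 - ((z.1 - meanX p) * (z.2 - meanY p)) / (varX p * varY p)) := by
    have hlhs : Integrable (fun z : ℝ × ℝ => -(psiMix p * ((margX p z.1 * margY p z.2) * |(score (margX p) z.1 * score (margY p) z.2 - ((z.1 - meanX p) * (z.2 - meanY p)) / (varX p * varY p))|))) :=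
      (hqabsF_int.const_mul _).neg
    have hrhs : Integrable (fun z : ℝ × ℝ => (p z - (margX p z.1 * margY p z.2)) * (score (margX p) z.1 * score (margY p) z.2 - ((z.1 - meanX p) * (z.2 - meanY p)) / (varX p * varY p))) :=
      (hpF_int.sub hqF_int).congr (Filter.Eventually.of_forall fun z => by
        simp only [Pi.sub_apply]; ring)
    have h := integral_mono_ae hlhs hrhs ?_
    · rwa [integral_neg, integral_const_mul] at h
    · filter_upwards [hae] with z hz
      have h1 : |(p z - (margX p z.1 * margY p z.2)) * (score (margX p) z.1 * score (margY p) z.2 - ((z.1 - meanX p) * (z.2 - meanY p)) / (varX p * varY p))| ≤ psiMix p * ((margX p z.1 * margY p z.2) * |(score (margX p) z.1 * score (margY p) z.2 - ((z.1 - meanX p) * (z.2 - meanY p)) / (varX p * varY p))|) := by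
        rw [abs_mul]
        calc |p z - (margX p z.1 * margY p z.2)| * |(score (margX p) z.1 * score (margY p) z.2 - ((z.1 - meanX p) * (z.2 - meanY p)) / (varX p * varY p))| ≤ (psiMix p * (margX p z.1 * margY p z.2)) * |(score (margX p) z.1 * score (margY p) z.2 - ((z.1 - meanX p) * (z.2 - meanY p)) / (varX p * varY p))| :=
              mul_le_mul_of_nonneg_right hz (abs_nonneg _)
          _ = psiMix p * ((margX p z.1 * margY p z.2) * |(score (margX p) z.1 * score (margY p) z.2 - ((z.1 - meanX p) * (z.2 - meanY p)) / (varX p * varY p))|) := by ring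
      have h2 := neg_abs_le ((p z - (margX p z.1 * margY p z.2)) * (score (margX p) z.1 * score (margY p) z.2 - ((z.1 - meanX p) * (z.2 - meanY p)) / (varX p * varY p)))
      linarith
  have hCS : (∫ z : ℝ × ℝ, (margX p z.1 * margY p z.2) * |(score (margX p) z.1 * score (margY p) z.2 - ((z.1 - meanX p) * (z.2 - meanY p)) / (varX p * varY p))|)
      ≤ Real.sqrt (fisherInfo (margX p) * fisherInfo (margY p) - (varX p * varY p)⁻¹) := by
    rw [← hIqF2]
    exact aux_cs hq_nn hIq hqint hqabsF_int hqF2_int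
  have hcov : covXY p = ∫ z : ℝ × ℝ, p z * ((z.1 - meanX p) * (z.2 - meanY p)) := rfl
  rw [hcov]
  calc -(psiMix p * Real.sqrt (fisherInfo (margX p) * fisherInfo (margY p) - (varX p * varY p)⁻¹))
      ≤ -(psiMix p * ∫ z : ℝ × ℝ, (margX p z.1 * margY p z.2) * |(score (margX p) z.1 * score (margY p) z.2 - ((z.1 - meanX p) * (z.2 - meanY p)) / (varX p * varY p))|) :=
        neg_le_neg (mul_le_mul_of_nonneg_left hCS hψ0)
    _ ≤ ∫ z : ℝ × ℝ, (p z - (margX p z.1 * margY p z.2)) * (score (margX p) z.1 * score (margY p) z.2 - ((z.1 - meanX p) * (z.2 - meanY p)) / (varX p * varY p)) := hmono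
    _ = ∫ z : ℝ × ℝ, p z * (score (margX p) z.1 * score (margY p) z.2 - ((z.1 - meanX p) * (z.2 - meanY p)) / (varX p * varY p)) := hsplit
    _ = (∫ z : ℝ × ℝ, p z * (score (margX p) z.1 * score (margY p) z.2)) - (∫ z : ℝ × ℝ, p z * ((z.1 - meanX p) * (z.2 - meanY p))) / (varX p * varY p) := hpF_eq
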